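/- arXiv:2006.03694 — 5 statements merged into one kernel-verified Lean document; each statement's English description precedes it below -/
import Mathlib

section
/- Consider the constrained problem: minimize ||H p + g||^2 + phi^2 ||p||^2 subject to <p, g> <= -theta ||g||^2, where H is symmetric, phi > 0, theta > 0, and g is nonzero. Writing H_tilde = [H; phi I], g_tilde = (g; 0), if <H_tilde^dagger g_tilde, g> < theta ||g||^2, then the unique minimizer is p* = -H_tilde^dagger g_tilde - lambda * (H_tilde^T H_tilde)^{-1} g, where lambda = (-<H_tilde^dagger g_tilde, g> + theta ||g||^2) / <(H_tilde^T H_tilde)^{-1} g, g> > 0, and p* satisfies <p*, g> = -theta ||g||^2. -/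
open Matrix
open scoped RealInnerProductSpace

/-- For `H` symmetric, `φ, θ > 0`, `g ≠ 0`, with `H̃ = [H; φI]`,
`g̃ = (g; 0)`, so `H̃†g̃ = (H² + φ²I)⁻¹ H g` and `H̃ᵀH̃ = H² + φ²I`: if
`⟪H̃†g̃, g⟫ < θ‖g‖²`, then `p* = -H̃†g̃ - λ (H̃ᵀH̃)⁻¹ g` with
`λ = (-⟪H̃†g̃, g⟫ + θ‖g‖²)/⟪(H̃ᵀH̃)⁻¹ g, g⟫ > 0` is the unique minimizer of
`‖H p + g‖² + φ²‖p‖²` subject to `⟪p, g⟫ ≤ -θ‖g‖²`, and `⟪p*, g⟫ = -θ‖g‖²`. -/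
theorem constrained_least_squares_minimizer
    {d : ℕ} (H : Matrix (Fin d) (Fin d) ℝ) (φ θ : ℝ)
    (hsymm : H.IsSymm) (hφ : 0 < φ) (hθ : 0 < θ)
    (g : EuclideanSpace ℝ (Fin d)) (hg : g ≠ 0)
    (A : Matrix (Fin d) (Fin d) ℝ)
    (hA : A = H ^ 2 + φ ^ 2 • (1 : Matrix (Fin d) (Fin d) ℝ))
    (u q : EuclideanSpace ℝ (Fin d))
    (hu : u = A⁻¹.toEuclideanLin (H.toEuclideanLin g))
    (hq : q = A⁻¹.toEuclideanLin g)
    (hcase : ⟪u, g⟫ < θ * ‖g‖ ^ 2)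
    (lam : ℝ) (hlam : lam = (-⟪u, g⟫ + θ * ‖g‖ ^ 2) / ⟪q, g⟫) :
    0 < lam
    ∧ ⟪-u - lam • q, g⟫ = -θ * ‖g‖ ^ 2
    ∧ (∀ p : EuclideanSpace ℝ (Fin d), ⟪p, g⟫ ≤ -θ * ‖g‖ ^ 2 →
        ‖H.toEuclideanLin (-u - lam • q) + g‖ ^ 2 + φ ^ 2 * ‖-u - lam • q‖ ^ 2
          ≤ ‖H.toEuclideanLin p + g‖ ^ 2 + φ ^ 2 * ‖p‖ ^ 2)
    ∧ (∀ p : EuclideanSpace ℝ (Fin d), ⟪p, g⟫ ≤ -θ * ‖g‖ ^ 2 → p ≠ -u - lam • q →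
        ‖H.toEuclideanLin (-u - lam • q) + g‖ ^ 2 + φ ^ 2 * ‖-u - lam • q‖ ^ 2
          < ‖H.toEuclideanLin p + g‖ ^ 2 + φ ^ 2 * ‖p‖ ^ 2) := by
  have hHherm : H.IsHermitian := by
    rw [Matrix.IsHermitian, Matrix.conjTranspose_eq_transpose_of_trivial]; exact hsymm
  have hsymT : H.toEuclideanLin.IsSymmetric := Matrix.isHermitian_iff_isSymmetric.mp hHherm
  set T := H.toEuclideanLin with hT
  -- A is positive definite
  have hApd : A.PosDef := by
    rw [hA]
    refine Matrix.PosDef.posSemidef_add ?_ ?_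
    · have h2 : H ^ 2 = Hᴴ * H := by
        rw [Matrix.conjTranspose_eq_transpose_of_trivial, hsymm, pow_two]
      rw [h2]
      exact Matrix.posSemidef_conjTranspose_mul_self H
    · exact Matrix.PosDef.one.smul (pow_pos hφ 2)
  have hdet : IsUnit A.det := (Matrix.isUnit_iff_isUnit_det A).mp hApd.isUnit
  have hAA : A * A⁻¹ = 1 := Matrix.mul_nonsing_inv A hdet
  -- applying A undoes A⁻¹
  have hinv : ∀ x : EuclideanSpace ℝ (Fin d),
      A.toEuclideanLin (A⁻¹.toEuclideanLin x) = x := by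
    intro x
    simp only [Matrix.toEuclideanLin_apply, Equiv.apply_symm_apply,
      Matrix.mulVec_mulVec, hAA, Matrix.one_mulVec, Equiv.symm_apply_apply]
  have hTAu : A.toEuclideanLin u = T g := by rw [hu]; exact hinv _
  have hTAq : A.toEuclideanLin q = g := by rw [hq]; exact hinv _
  -- expansion of A.toEuclideanLin
  have hTAx : ∀ x : EuclideanSpace ℝ (Fin d),
      A.toEuclideanLin x = T (T x) + φ ^ 2 • x := by
    intro x
    rw [hA]
    simp only [hT, Matrix.toEuclideanLin_apply, Equiv.apply_symm_apply,
      Matrix.add_mulVec, Matrix.smul_mulVec, Matrix.one_mulVec, pow_two,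
      Matrix.mulVec_mulVec]
    rfl
  -- quadratic form identity
  have hquad : ∀ x : EuclideanSpace ℝ (Fin d),
      ⟪x, A.toEuclideanLin x⟫ = ‖T x‖ ^ 2 + φ ^ 2 * ‖x‖ ^ 2 := by
    intro x
    rw [hTAx, inner_add_right, real_inner_smul_right, ← hsymT x (T x),
      real_inner_self_eq_norm_sq, real_inner_self_eq_norm_sq]
  -- q ≠ 0 and ⟪q, g⟫ > 0
  have hqne : q ≠ 0 := by
    intro h
    apply hg
    rw [← hTAq, h, map_zero]
  have hqg : 0 < ⟪q, g⟫ := by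
    have := hquad q
    rw [hTAq] at this
    rw [this]
    have h1 : 0 < φ ^ 2 * ‖q‖ ^ 2 :=
      mul_pos (pow_pos hφ 2) (pow_pos (norm_pos_iff.mpr hqne) 2)
    nlinarith [sq_nonneg ‖T q‖]
  have hlampos : 0 < lam := by
    rw [hlam]
    exact div_pos (by linarith) hqg
  -- main inequality machinery
  obtain ⟨c, hc⟩ : ∃ c : EuclideanSpace ℝ (Fin d), c = -u - lam • q := ⟨_, rfl⟩
  rw [← hc]
  have hcg : ⟪c, g⟫ = -θ * ‖g‖ ^ 2 := by
    rw [hc, inner_sub_left, inner_neg_left, real_inner_smul_left, hlam,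
      div_mul_cancel₀ _ (ne_of_gt hqg)]
    ring
  have hTAc : A.toEuclideanLin c = -(T g) - lam • g := by
    rw [hc, map_sub, map_neg, LinearMap.map_smul, hTAu, hTAq]
  have hcross : ∀ v : EuclideanSpace ℝ (Fin d),
      ⟪T v, T c⟫ + φ ^ 2 * ⟪v, c⟫ + ⟪T v, g⟫ = -(lam * ⟪v, g⟫) := by
    intro v
    have h1 : ⟪T v, T c⟫ = ⟪v, T (T c)⟫ := hsymT v (T c)
    have h2 : ⟪T v, g⟫ = ⟪v, T g⟫ := hsymT v g
    have h3 : ⟪v, T (T c)⟫ + φ ^ 2 * ⟪v, c⟫ = ⟪v, A.toEuclideanLin c⟫ := by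
      rw [hTAx, inner_add_right, real_inner_smul_right]
    rw [h1, h2, h3, hTAc, inner_sub_right, inner_neg_right,
      real_inner_smul_right]
    ring
  have key : ∀ p : EuclideanSpace ℝ (Fin d),
      ‖T p + g‖ ^ 2 + φ ^ 2 * ‖p‖ ^ 2
        = (‖T c + g‖ ^ 2 + φ ^ 2 * ‖c‖ ^ 2)
          + (‖T (p - c)‖ ^ 2 + φ ^ 2 * ‖p - c‖ ^ 2) - 2 * lam * ⟪p - c, g⟫ := by
    intro p
    have e1 : ‖T p + g‖ ^ 2
        = ‖T c + g‖ ^ 2 + 2 * ⟪T c + g, T (p - c)⟫ + ‖T (p - c)‖ ^ 2 := by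
      rw [show T p + g = (T c + g) + T (p - c) by rw [map_sub]; abel]
      exact norm_add_sq_real _ _
    have e2 : ‖p‖ ^ 2 = ‖c‖ ^ 2 + 2 * ⟪c, p - c⟫ + ‖p - c‖ ^ 2 := by
      conv_lhs => rw [show p = c + (p - c) by abel]
      exact norm_add_sq_real _ _
    have e3 : ⟪T c + g, T (p - c)⟫ = ⟪T (p - c), T c⟫ + ⟪T (p - c), g⟫ := by
      rw [inner_add_left, real_inner_comm (T c) (T (p - c)),
        real_inner_comm g (T (p - c))]
    have e4 := hcross (p - c)
    have e5 : ⟪c, p - c⟫ = ⟪p - c, c⟫ := real_inner_comm _ _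
    rw [e5] at e2
    rw [e1, e2, e3]
    linarith [e4]
  have hle : ∀ p : EuclideanSpace ℝ (Fin d), ⟪p, g⟫ ≤ -θ * ‖g‖ ^ 2 →
      ⟪p - c, g⟫ ≤ 0 := by
    intro p hp
    rw [inner_sub_left, hcg]
    linarith
  refine ⟨hlampos, hcg, ?_, ?_⟩
  · intro p hp
    have h1 := key p
    have h2 := hle p hp
    have h3 : 0 ≤ ‖T (p - c)‖ ^ 2 + φ ^ 2 * ‖p - c‖ ^ 2 := by positivity
    have h4 : 0 ≤ lam * (-⟪p - c, g⟫) := mul_nonneg hlampos.le (neg_nonneg.mpr h2)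
    linarith
  · intro p hp hne
    have h1 := key p
    have h2 := hle p hp
    have h3 : 0 < φ ^ 2 * ‖p - c‖ ^ 2 := by
      have : p - c ≠ 0 := sub_ne_zero.mpr hne
      exact mul_pos (pow_pos hφ 2) (pow_pos (norm_pos_iff.mpr this) 2)
    have h4 : 0 ≤ lam * (-⟪p - c, g⟫) := mul_nonneg hlampos.le (neg_nonneg.mpr h2)
    have h5 : (0:ℝ) ≤ ‖T (p - c)‖ ^ 2 := sq_nonneg _
    linarith
end

section
/- Let H_tilde = [H; phi I] with H symmetric, ||H|| <= L_i, phi > 0, and g_tilde = (g; 0). If v satisfies ||H_tilde^T H_tilde v - H g|| <= epsilon ||H g|| with 0 <= epsilon < 1, then ||v - H_tilde^dagger g_tilde|| <= epsilon * ((L_i^2 + phi^2)/phi^2) * ||H_tilde^dagger g_tilde||, and hence ||v|| <= (1/phi)(1 + epsilon (L_i^2 + phi^2)/phi^2) * ||g||. -/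
open Matrix
open scoped Matrix.Norms.L2Operator RealInnerProductSpace

lemma tel_mul {d : ℕ} (M N : Matrix (Fin d) (Fin d) ℝ) (x : EuclideanSpace ℝ (Fin d)) :
    (M * N).toEuclideanLin x = M.toEuclideanLin (N.toEuclideanLin x) := by
  simp [Matrix.toEuclideanLin_apply, Matrix.mulVec_mulVec]

lemma tel_one {d : ℕ} (x : EuclideanSpace ℝ (Fin d)) :
    (1 : Matrix (Fin d) (Fin d) ℝ).toEuclideanLin x = x := by
  simp [Matrix.toEuclideanLin_apply, Matrix.one_mulVec]

lemma tel_norm_le {d : ℕ} (M : Matrix (Fin d) (Fin d) ℝ) (x : EuclideanSpace ℝ (Fin d)) :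
    ‖M.toEuclideanLin x‖ ≤ ‖M‖ * ‖x‖ :=
  M.l2_opNorm_mulVec x

set_option maxHeartbeats 1000000 in
/-- With `H̃ = [H; φI]`, `H` symmetric, `‖H‖ ≤ Lᵢ`, `φ > 0`,
`g̃ = (g; 0)`, and `H̃†g̃ = (H² + φ²I)⁻¹ H g`: if `v` satisfies
`‖H̃ᵀH̃ v - H g‖ ≤ ε ‖H g‖` with `0 ≤ ε < 1`, then
`‖v - H̃†g̃‖ ≤ ε ((Lᵢ² + φ²)/φ²) ‖H̃†g̃‖` and
`‖v‖ ≤ (1/φ)(1 + ε (Lᵢ² + φ²)/φ²) ‖g‖`. -/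
theorem inexact_least_squares_solution_bounds
    {d : ℕ} (H : Matrix (Fin d) (Fin d) ℝ) (Li φ ε : ℝ)
    (hsymm : H.IsSymm) (hnorm : ‖H‖ ≤ Li) (hφ : 0 < φ)
    (hε0 : 0 ≤ ε) (hε1 : ε < 1)
    (g v : EuclideanSpace ℝ (Fin d))
    (A : Matrix (Fin d) (Fin d) ℝ)
    (hA : A = H ^ 2 + φ ^ 2 • (1 : Matrix (Fin d) (Fin d) ℝ))
    (hres : ‖A.toEuclideanLin v - H.toEuclideanLin g‖ ≤ ε * ‖H.toEuclideanLin g‖) :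
    ‖v - A⁻¹.toEuclideanLin (H.toEuclideanLin g)‖
      ≤ ε * ((Li ^ 2 + φ ^ 2) / φ ^ 2) * ‖A⁻¹.toEuclideanLin (H.toEuclideanLin g)‖
    ∧ ‖v‖ ≤ 1 / φ * (1 + ε * ((Li ^ 2 + φ ^ 2) / φ ^ 2)) * ‖g‖ := by
  have hφ2 : (0:ℝ) < φ ^ 2 := by positivity
  have hH : H.IsHermitian := by
    rwa [Matrix.IsHermitian, Matrix.conjTranspose_eq_transpose_of_trivial]
  have hsymL : H.toEuclideanLin.IsSymmetric := Matrix.isHermitian_iff_isSymmetric.mp hH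
  -- A is positive definite
  have hApd : A.PosDef := by
    rw [hA]
    refine Matrix.PosDef.posSemidef_add ?_ ?_
    · have h := Matrix.posSemidef_conjTranspose_mul_self H
      rwa [hH.eq, ← pow_two] at h
    · rw [Matrix.smul_one_eq_diagonal]
      exact Matrix.posDef_diagonal_iff.mpr (fun i => hφ2)
  have hdet : IsUnit A.det := (Matrix.isUnit_iff_isUnit_det A).mp hApd.isUnit
  set u := A⁻¹.toEuclideanLin (H.toEuclideanLin g) with hu
  have hAu : A.toEuclideanLin u = H.toEuclideanLin g := by
    rw [hu, ← tel_mul, Matrix.mul_nonsing_inv A hdet, tel_one]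
  -- pointwise formula
  have hAx : ∀ x : EuclideanSpace ℝ (Fin d),
      A.toEuclideanLin x = H.toEuclideanLin (H.toEuclideanLin x) + φ ^ 2 • x := by
    intro x
    rw [hA, map_add, _root_.map_smul, LinearMap.add_apply, LinearMap.smul_apply, pow_two,
      tel_mul, tel_one]
  have hinner : ∀ x : EuclideanSpace ℝ (Fin d),
      ⟪A.toEuclideanLin x, x⟫ = ‖H.toEuclideanLin x‖ ^ 2 + φ ^ 2 * ‖x‖ ^ 2 := by
    intro x
    rw [hAx x, inner_add_left, real_inner_smul_left, hsymL,
      real_inner_self_eq_norm_sq, real_inner_self_eq_norm_sq]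
  -- coercivity
  have hlow : ∀ x : EuclideanSpace ℝ (Fin d), φ ^ 2 * ‖x‖ ≤ ‖A.toEuclideanLin x‖ := by
    intro x
    by_cases hx : x = 0
    · simp [hx]
    · have hxp : 0 < ‖x‖ := norm_pos_iff.mpr hx
      have h1 : φ ^ 2 * ‖x‖ ^ 2 ≤ ⟪A.toEuclideanLin x, x⟫ := by
        rw [hinner x]; nlinarith [sq_nonneg ‖H.toEuclideanLin x‖]
      have h2 : ⟪A.toEuclideanLin x, x⟫ ≤ ‖A.toEuclideanLin x‖ * ‖x‖ :=
        real_inner_le_norm _ _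
      nlinarith
  -- upper bound on A
  have hLi : 0 ≤ Li := le_trans (norm_nonneg H) hnorm
  have hup : ∀ x : EuclideanSpace ℝ (Fin d),
      ‖A.toEuclideanLin x‖ ≤ (Li ^ 2 + φ ^ 2) * ‖x‖ := by
    intro x
    calc ‖A.toEuclideanLin x‖
        ≤ ‖H.toEuclideanLin (H.toEuclideanLin x)‖ + ‖φ ^ 2 • x‖ := by
          rw [hAx x]; exact norm_add_le _ _
      _ ≤ ‖H‖ * (‖H‖ * ‖x‖) + φ ^ 2 * ‖x‖ := by
          have h1 := tel_norm_le H (H.toEuclideanLin x)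
          have h2 := tel_norm_le H x
          have h3 : ‖φ ^ 2 • x‖ = φ ^ 2 * ‖x‖ := by
            rw [norm_smul, Real.norm_eq_abs, abs_of_pos hφ2]
          rw [h3]
          have := mul_le_mul_of_nonneg_left h2 (norm_nonneg H)
          linarith
      _ ≤ (Li ^ 2 + φ ^ 2) * ‖x‖ := by
          nlinarith [mul_le_mul_of_nonneg_right
            (mul_le_mul hnorm hnorm (norm_nonneg H) hLi) (norm_nonneg x)]
  -- first part
  have hkey : ‖v - u‖ ≤ ε * ((Li ^ 2 + φ ^ 2) / φ ^ 2) * ‖u‖ := by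
    have h1 := hlow (v - u)
    have h2 : A.toEuclideanLin (v - u) = A.toEuclideanLin v - H.toEuclideanLin g := by
      rw [map_sub, hAu]
    rw [h2] at h1
    have h3 : ‖H.toEuclideanLin g‖ ≤ (Li ^ 2 + φ ^ 2) * ‖u‖ := hAu ▸ hup u
    have h4 : φ ^ 2 * ‖v - u‖ ≤ ε * ((Li ^ 2 + φ ^ 2) * ‖u‖) := by
      have := mul_le_mul_of_nonneg_left h3 hε0
      linarith
    have heq : ε * ((Li ^ 2 + φ ^ 2) / φ ^ 2) * ‖u‖
        = ε * ((Li ^ 2 + φ ^ 2) * ‖u‖) / φ ^ 2 := by ring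
    rw [heq, le_div_iff₀ hφ2]
    linarith [h4]
  refine ⟨hkey, ?_⟩
  -- ‖u‖ bound
  have hu_le : φ * ‖u‖ ≤ ‖g‖ := by
    have e1 : ‖H.toEuclideanLin u‖ ^ 2 + φ ^ 2 * ‖u‖ ^ 2 = ⟪g, H.toEuclideanLin u⟫ := by
      rw [← hinner u, hAu, ← hsymL]
    have e2 : ⟪g, H.toEuclideanLin u⟫ ≤ ‖g‖ * ‖H.toEuclideanLin u‖ := real_inner_le_norm _ _
    have h2 : (φ * ‖u‖) ^ 2 ≤ ‖g‖ ^ 2 := by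
      nlinarith [sq_nonneg (‖g‖ - 2 * ‖H.toEuclideanLin u‖)]
    nlinarith [h2, norm_nonneg g, mul_nonneg hφ.le (norm_nonneg u)]
  -- second part
  have hc : 0 ≤ ε * ((Li ^ 2 + φ ^ 2) / φ ^ 2) := by positivity
  have htri : ‖v‖ ≤ ‖v - u‖ + ‖u‖ := by
    have := norm_add_le (v - u) u
    simpa using this
  have h5 : ‖v‖ ≤ (1 + ε * ((Li ^ 2 + φ ^ 2) / φ ^ 2)) * ‖u‖ := by
    rw [one_add_mul]; linarith
  calc ‖v‖ ≤ (1 + ε * ((Li ^ 2 + φ ^ 2) / φ ^ 2)) * ‖u‖ := h5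
    _ = 1 / φ * ((1 + ε * ((Li ^ 2 + φ ^ 2) / φ ^ 2)) * (φ * ‖u‖)) := by
        field_simp
    _ ≤ 1 / φ * ((1 + ε * ((Li ^ 2 + φ ^ 2) / φ ^ 2)) * ‖g‖) := by
        have h6 : (1 + ε * ((Li ^ 2 + φ ^ 2) / φ ^ 2)) * (φ * ‖u‖)
            ≤ (1 + ε * ((Li ^ 2 + φ ^ 2) / φ ^ 2)) * ‖g‖ :=
          mul_le_mul_of_nonneg_left hu_le (by linarith)
        exact mul_le_mul_of_nonneg_left h6 (by positivity)
    _ = 1 / φ * (1 + ε * ((Li ^ 2 + φ ^ 2) / φ ^ 2)) * ‖g‖ := by ring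
end

section
/- Under the hypotheses of the DINO update, each local update direction p_i (whether p_i = -v_i^{(1)} or the corrected p_i = -v_i^{(1)} - lambda_i v_i^{(2)}) satisfies ||p_i|| <= a_i ||g|| where a_i = (1/phi)(1 + epsilon_i^{(1)} (L_i^2 + phi^2)/phi^2) + b_i and b_i = ((1 + epsilon_i^{(2)} (L_i^2+phi^2)/phi^2)/(1 - epsilon_i^{(2)} sqrt((L_i^2+phi^2)/phi^2))) * ((1/phi)(1 + epsilon_i^{(1)} (L_i^2+phi^2)/phi^2) + theta) * sqrt((L_i^2+phi^2)/phi^2), with b_i omitted when p_i = -v_i^{(1)}. -/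
open Matrix
open scoped Matrix.Norms.L2Operator RealInnerProductSpace

/-- Cauchy–Schwarz for a nonnegative symmetric bilinear form coming from a linear map. -/
lemma dino_cs_aux {E : Type*} [NormedAddCommGroup E] [InnerProductSpace ℝ E]
    (S : E →ₗ[ℝ] E) (hsym : ∀ x y : E, ⟪S x, y⟫ = ⟪x, S y⟫)
    (hnn : ∀ x : E, 0 ≤ ⟪x, S x⟫) (x y : E) :
    ⟪x, S y⟫ ^ 2 ≤ ⟪x, S x⟫ * ⟪y, S y⟫ := by
  have key : ∀ u : ℝ, 0 ≤ ⟪y, S y⟫ * (u * u) + (2 * ⟪x, S y⟫) * u + ⟪x, S x⟫ := by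
    intro u
    have h0 := hnn (x + u • y)
    have hyx : ⟪y, S x⟫ = ⟪x, S y⟫ := by
      rw [real_inner_comm]; exact hsym x y
    have hexp : ⟪x + u • y, S (x + u • y)⟫
        = ⟪y, S y⟫ * (u * u) + (2 * ⟪x, S y⟫) * u + ⟪x, S x⟫ := by
      simp only [map_add, LinearMap.map_smul, inner_add_left, inner_add_right,
        real_inner_smul_left, real_inner_smul_right, hyx]
      ring
    rw [hexp] at h0
    exact h0
  have hd := discrim_le_zero key
  rw [discrim] at hd
  nlinarith [hd]

lemma dino_cs_abs {E : Type*} [NormedAddCommGroup E] [InnerProductSpace ℝ E]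
    (S : E →ₗ[ℝ] E) (hsym : ∀ x y : E, ⟪S x, y⟫ = ⟪x, S y⟫)
    (hnn : ∀ x : E, 0 ≤ ⟪x, S x⟫) (x y : E) :
    |⟪x, S y⟫| ≤ Real.sqrt ⟪x, S x⟫ * Real.sqrt ⟪y, S y⟫ := by
  rw [← Real.sqrt_sq_eq_abs, ← Real.sqrt_mul (hnn x)]
  exact Real.sqrt_le_sqrt (dino_cs_aux S hsym hnn x y)

/-- scalar fact: `a ≤ w*r`, `φ²w² ≤ a` imply `a ≤ (r/φ)²`. -/
lemma dino_sc_res (a w r φ : ℝ) (hφ : 0 < φ) (h1 : a ≤ w * r) (h2 : φ ^ 2 * w ^ 2 ≤ a)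
    (h3 : 0 ≤ w) (h4 : 0 ≤ r) : a ≤ (r / φ) ^ 2 := by
  rw [div_pow, le_div_iff₀ (by positivity)]
  nlinarith [sq_nonneg (r - φ ^ 2 * w), mul_le_mul_of_nonneg_left h1 (sq_nonneg φ),
    mul_le_mul_of_nonneg_left h2 (sq_nonneg φ)]

lemma dino_sc_cancel (c M : ℝ) (hc : 0 ≤ c) (hM : 0 ≤ M) (h : c ^ 2 ≤ c * M) : c ≤ M := by
  nlinarith

lemma dino_sc_sqle (φ V c : ℝ) (hφ : 0 ≤ φ) (hV : 0 ≤ V) (hc : 0 ≤ c)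
    (h : φ ^ 2 * V ^ 2 ≤ c ^ 2) : φ * V ≤ c := by
  nlinarith [mul_nonneg hφ hV]

lemma dino_sc_z (u G TZ : ℝ) (h2 : u ≤ TZ * G) (h3 : TZ ^ 2 ≤ u) (h0 : 0 ≤ u)
    (hG : 0 ≤ G) : u ≤ G ^ 2 := by
  nlinarith

/-- scalar lemma for the bound on `‖v₁‖`. -/
lemma dino_scalar1 (Li φ ε₁ G V1 c₁ κ : ℝ) (hφ : 0 < φ) (hLi0 : 0 ≤ Li) (hε₁0 : 0 ≤ ε₁)
    (hG : 0 < G) (hκ : κ = (Li ^ 2 + φ ^ 2) / φ ^ 2)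
    (hc₁ : c₁ ≤ G + ε₁ * Li * G / φ) (hv1φ : φ * V1 ≤ c₁) :
    V1 ≤ 1 / φ * (1 + ε₁ * κ) * G := by
  subst hκ
  rw [show 1 / φ * (1 + ε₁ * ((Li ^ 2 + φ ^ 2) / φ ^ 2)) * G
      = (φ ^ 2 * G + ε₁ * (Li ^ 2 + φ ^ 2) * G) / φ ^ 3 by field_simp,
    le_div_iff₀ (by positivity)]
  have hc₁' : φ * c₁ ≤ φ * G + ε₁ * Li * G := by
    have h1 := mul_le_mul_of_nonneg_left hc₁ hφ.le
    rw [mul_add, mul_div_cancel₀ _ (ne_of_gt hφ)] at h1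
    linarith
  nlinarith [mul_le_mul_of_nonneg_left hv1φ (by positivity : (0:ℝ) ≤ φ ^ 2),
    mul_le_mul_of_nonneg_left hc₁' hφ.le,
    mul_nonneg (mul_nonneg hε₁0 hG.le) (sq_nonneg (Li - φ)),
    mul_nonneg (mul_nonneg hε₁0 hG.le) (mul_nonneg hLi0 hφ.le)]

/-- scalar lemma for the corrected-direction bound. -/
lemma dino_scalar2 (Li φ θ ε₁ ε₂ G V1 V2 D I1 s t c₂ κ σ lam b : ℝ)
    (hφ : 0 < φ) (hLi0 : 0 ≤ Li) (hθ : 0 < θ) (hε₁0 : 0 ≤ ε₁) (hε₂0 : 0 ≤ ε₂)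
    (hG : 0 < G) (hκ : κ = (Li ^ 2 + φ ^ 2) / φ ^ 2)
    (hσ0 : 0 < σ) (hσ1 : 1 ≤ σ) (hσ2 : σ ^ 2 = κ) (hε₂σ : ε₂ * σ < 1)
    (hsnn : 0 ≤ s) (hs6 : (G ^ 2) ^ 2 ≤ s ^ 2 * ((Li ^ 2 + φ ^ 2) * G ^ 2))
    (ht : t = ε₂ * G / φ)
    (hD : s ^ 2 - t * s ≤ D) (hDpos : 0 < D)
    (hc₂ : c₂ ≤ s + t) (hv2φ : φ * V2 ≤ c₂) (hV2 : 0 ≤ V2)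
    (hV1 : V1 ≤ 1 / φ * (1 + ε₁ * κ) * G)
    (hI1 : -I1 ≤ V1 * G) (hV1nn : 0 ≤ V1)
    (hcase : I1 < θ * G ^ 2)
    (hlam : lam = (-I1 + θ * G ^ 2) / D)
    (hb : b = (1 + ε₂ * κ) / (1 - ε₂ * σ) * (1 / φ * (1 + ε₁ * κ) + θ) * σ) :
    0 ≤ lam ∧ lam * V2 ≤ b * G := by
  have hκ0 : 0 < κ := by rw [hκ]; positivity
  have hκ1 : 1 ≤ κ := by
    have h := mul_le_mul hσ1 hσ1 zero_le_one (by linarith : (0:ℝ) ≤ σ)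
    linarith [h, hσ2]
  have hσκ : σ ≤ κ := by
    have h := mul_le_mul_of_nonneg_left hσ1 hσ0.le
    linarith [h, hσ2]
  have h1σ : 0 < 1 - ε₂ * σ := by linarith
  have hsG : G ≤ φ * σ * s := by
    have h4 : Li ^ 2 + φ ^ 2 = φ ^ 2 * κ := by rw [hκ]; field_simp
    have h7 : (φ * σ * s) ^ 2 = (Li ^ 2 + φ ^ 2) * s ^ 2 := by rw [h4, ← hσ2]; ring
    have h5 : G ^ 2 ≤ (φ * σ * s) ^ 2 := by
      have hG2 : (0:ℝ) < G ^ 2 := by positivity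
      have h6 : G ^ 2 * G ^ 2 ≤ (φ * σ * s) ^ 2 * G ^ 2 := by
        calc G ^ 2 * G ^ 2 = (G ^ 2) ^ 2 := by ring
          _ ≤ s ^ 2 * ((Li ^ 2 + φ ^ 2) * G ^ 2) := hs6
          _ = (φ * σ * s) ^ 2 * G ^ 2 := by rw [h7]; ring
      exact le_of_mul_le_mul_right h6 hG2
    exact le_of_pow_le_pow_left₀ two_ne_zero
      (mul_nonneg (mul_nonneg hφ.le hσ0.le) hsnn) h5
  have hspos : 0 < s := by
    by_contra hs
    push_neg at hs
    have h8 : φ * σ * s ≤ 0 :=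
      mul_nonpos_of_nonneg_of_nonpos (mul_nonneg hφ.le hσ0.le) hs
    linarith
  have htnn : 0 ≤ t := by rw [ht]; positivity
  have hts : t ≤ ε₂ * σ * s := by
    rw [ht, div_le_iff₀ hφ]
    have h := mul_le_mul_of_nonneg_left hsG hε₂0
    linarith
  have hD2 : (1 - ε₂ * σ) * s ^ 2 ≤ D := by
    have h := mul_le_mul_of_nonneg_right hts hsnn
    linarith [h, hD]
  have hv2φ' : φ * V2 ≤ (1 + ε₂ * σ) * s := by
    have h9 : φ * V2 ≤ s + t := le_trans hv2φ hc₂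
    linarith [h9, hts]
  have hNpos : 0 < -I1 + θ * G ^ 2 := by linarith
  have hκε₁ : (0:ℝ) ≤ ε₁ * κ := mul_nonneg hε₁0 hκ0.le
  have hφinv : (0:ℝ) < 1 / φ := by positivity
  have hP0 : 0 < 1 / φ * (1 + ε₁ * κ) + θ := by
    have h := mul_nonneg hφinv.le (by linarith : (0:ℝ) ≤ 1 + ε₁ * κ)
    linarith
  have hNle : -I1 + θ * G ^ 2 ≤ (1 / φ * (1 + ε₁ * κ) + θ) * G ^ 2 := by
    have h := mul_le_mul_of_nonneg_right hV1 hG.le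
    linarith [h, hI1]
  have hε₂κ : (0:ℝ) ≤ 1 + ε₂ * κ := by
    have := mul_nonneg hε₂0 hκ0.le
    linarith
  have hb0 : 0 ≤ b := by
    rw [hb]
    exact mul_nonneg (mul_nonneg (div_nonneg hε₂κ h1σ.le) hP0.le) hσ0.le
  refine ⟨by rw [hlam]; exact le_of_lt (div_pos hNpos hDpos), ?_⟩
  rw [hlam, div_mul_eq_mul_div, div_le_iff₀ hDpos]
  have step1 : (-I1 + θ * G ^ 2) * V2 * φ
      ≤ ((1 / φ * (1 + ε₁ * κ) + θ) * G ^ 2) * ((1 + ε₂ * σ) * s) := by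
    have h := mul_le_mul hNle hv2φ' (mul_nonneg hφ.le hV2)
      (mul_nonneg hP0.le (sq_nonneg G))
    linarith [h]
  have hGle : (1 + ε₂ * σ) * G ≤ (1 + ε₂ * κ) * (φ * σ * s) := by
    have h1 : (1 + ε₂ * σ) * G ≤ (1 + ε₂ * σ) * (φ * σ * s) := by
      apply mul_le_mul_of_nonneg_left hsG
      have := mul_nonneg hε₂0 hσ0.le
      linarith
    have h2 : (1 + ε₂ * σ) * (φ * σ * s) ≤ (1 + ε₂ * κ) * (φ * σ * s) := by
      refine mul_le_mul_of_nonneg_right ?_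
        (mul_nonneg (mul_nonneg hφ.le hσ0.le) hsnn)
      have := mul_le_mul_of_nonneg_left hσκ hε₂0
      linarith
    linarith
  have step2 : ((1 / φ * (1 + ε₁ * κ) + θ) * G ^ 2) * ((1 + ε₂ * σ) * s)
      ≤ (1 + ε₂ * κ) * (1 / φ * (1 + ε₁ * κ) + θ) * σ * G * s ^ 2 * φ := by
    have h := mul_le_mul_of_nonneg_left hGle
      (mul_nonneg (mul_nonneg hP0.le hG.le) hspos.le)
    linarith [h]
  have step3 : (1 + ε₂ * κ) * (1 / φ * (1 + ε₁ * κ) + θ) * σ * G * s ^ 2 * φ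
      ≤ b * G * D * φ := by
    have heq : b * G * ((1 - ε₂ * σ) * s ^ 2) * φ
        = (1 + ε₂ * κ) * (1 / φ * (1 + ε₁ * κ) + θ) * σ * G * s ^ 2 * φ := by
      rw [hb]; field_simp
    rw [← heq]
    exact mul_le_mul_of_nonneg_right
      (mul_le_mul_of_nonneg_left hD2 (mul_nonneg hb0 hG.le)) hφ.le
  refine le_of_mul_le_mul_right ?_ hφ
  calc (-I1 + θ * G ^ 2) * V2 * φ
      ≤ (1 + ε₂ * κ) * (1 / φ * (1 + ε₁ * κ) + θ) * σ * G * s ^ 2 * φ :=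
        le_trans step1 step2
    _ ≤ b * G * D * φ := step3

set_option maxHeartbeats 1000000 in
/-- Each local DINO update direction `pᵢ` (whether `pᵢ = -vᵢ⁽¹⁾` or the
corrected `pᵢ = -vᵢ⁽¹⁾ - λᵢ vᵢ⁽²⁾`) satisfies `‖pᵢ‖ ≤ aᵢ ‖g‖`, where
`aᵢ = (1/φ)(1 + εᵢ⁽¹⁾(Lᵢ²+φ²)/φ²) + bᵢ` with `bᵢ` as in the theorem (and `bᵢ` omitted
in the uncorrected case). -/
theorem local_update_direction_bound
    {d : ℕ} (H : Matrix (Fin d) (Fin d) ℝ) (Li φ θ ε₁ ε₂ : ℝ)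
    (hsymm : H.IsSymm) (hnorm : ‖H‖ ≤ Li) (hφ : 0 < φ) (hθ : 0 < θ)
    (hε₁0 : 0 ≤ ε₁) (hε₁1 : ε₁ < 1) (hε₂0 : 0 ≤ ε₂)
    (hε₂ : ε₂ < Real.sqrt (φ ^ 2 / (Li ^ 2 + φ ^ 2)))
    (g v₁ v₂ : EuclideanSpace ℝ (Fin d)) (hg : g ≠ 0)
    (A : Matrix (Fin d) (Fin d) ℝ)
    (hA : A = H ^ 2 + φ ^ 2 • (1 : Matrix (Fin d) (Fin d) ℝ))
    (hres₁ : ‖A.toEuclideanLin v₁ - H.toEuclideanLin g‖ ≤ ε₁ * ‖H.toEuclideanLin g‖)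
    (hres₂ : ‖A.toEuclideanLin v₂ - g‖ ≤ ε₂ * ‖g‖)
    (hpos : 0 < ⟪v₂, g⟫)
    (lam b : ℝ)
    (hlam : lam = (-⟪v₁, g⟫ + θ * ‖g‖ ^ 2) / ⟪v₂, g⟫)
    (hb : b = (1 + ε₂ * ((Li ^ 2 + φ ^ 2) / φ ^ 2))
        / (1 - ε₂ * Real.sqrt ((Li ^ 2 + φ ^ 2) / φ ^ 2))
        * (1 / φ * (1 + ε₁ * ((Li ^ 2 + φ ^ 2) / φ ^ 2)) + θ)
        * Real.sqrt ((Li ^ 2 + φ ^ 2) / φ ^ 2)) :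
    ‖-v₁‖ ≤ 1 / φ * (1 + ε₁ * ((Li ^ 2 + φ ^ 2) / φ ^ 2)) * ‖g‖
    ∧ (⟪v₁, g⟫ < θ * ‖g‖ ^ 2 →
        ‖-v₁ - lam • v₂‖
          ≤ (1 / φ * (1 + ε₁ * ((Li ^ 2 + φ ^ 2) / φ ^ 2)) + b) * ‖g‖) := by
  have hg0 : 0 < ‖g‖ := norm_pos_iff.mpr hg
  have hLi0 : 0 ≤ Li := (norm_nonneg H).trans hnorm
  set κ := (Li ^ 2 + φ ^ 2) / φ ^ 2 with hκdef
  set σ := Real.sqrt κ with hσdef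
  have hκ0 : 0 < κ := by rw [hκdef]; positivity
  have hκ1 : 1 ≤ κ := by
    rw [hκdef, le_div_iff₀ (by positivity)]
    linarith [sq_nonneg Li]
  have hσ1 : 1 ≤ σ := by rw [hσdef]; exact Real.one_le_sqrt.mpr hκ1
  have hσ0 : 0 < σ := lt_of_lt_of_le one_pos hσ1
  have hσ2 : σ ^ 2 = κ := Real.sq_sqrt hκ0.le
  have hε₂σ : ε₂ * σ < 1 := by
    have h1 : φ ^ 2 / (Li ^ 2 + φ ^ 2) = κ⁻¹ := by
      rw [hκdef]; field_simp
    rw [h1, Real.sqrt_inv, ← hσdef] at hε₂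
    have h2 := mul_lt_mul_of_pos_right hε₂ hσ0
    rwa [inv_mul_cancel₀ (ne_of_gt hσ0)] at h2
  set T : EuclideanSpace ℝ (Fin d) →ₗ[ℝ] EuclideanSpace ℝ (Fin d) := Matrix.toEuclideanLin H with hT
  set S : EuclideanSpace ℝ (Fin d) →ₗ[ℝ] EuclideanSpace ℝ (Fin d) := Matrix.toEuclideanLin A with hS
  have hHherm : H.IsHermitian := by
    rwa [Matrix.IsHermitian, Matrix.conjTranspose_eq_transpose_of_trivial]
  have hAherm : A.IsHermitian := by
    rw [hA]
    simp [Matrix.IsHermitian, Matrix.conjTranspose_eq_transpose_of_trivial,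
      Matrix.transpose_add, Matrix.transpose_smul, Matrix.transpose_pow, hsymm.eq]
  have hTsym : ∀ x y, ⟪T x, y⟫ = ⟪x, T y⟫ := Matrix.isHermitian_iff_isSymmetric.mp hHherm
  have hSsym : ∀ x y, ⟪S x, y⟫ = ⟪x, S y⟫ := Matrix.isHermitian_iff_isSymmetric.mp hAherm
  have hSapp : ∀ x, S x = T (T x) + φ ^ 2 • x := by
    intro x
    rw [hS, hA, hT]
    apply (WithLp.equiv 2 _).injective
    simp [Matrix.toEuclideanLin_apply, Matrix.add_mulVec, Matrix.smul_mulVec,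
      Matrix.one_mulVec, pow_two, ← Matrix.mulVec_mulVec]
  have hTnorm : ∀ x, ‖T x‖ ≤ Li * ‖x‖ := by
    intro x
    calc ‖T x‖ ≤ ‖H‖ * ‖x‖ := Matrix.l2_opNorm_mulVec H x
      _ ≤ Li * ‖x‖ := by gcongr
  -- quadratic form identities
  have hSquad : ∀ x, ⟪x, S x⟫ = ‖T x‖ ^ 2 + φ ^ 2 * ‖x‖ ^ 2 := by
    intro x
    rw [hSapp x, inner_add_right, real_inner_smul_right, ← hTsym x (T x),
      real_inner_self_eq_norm_sq, real_inner_self_eq_norm_sq]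
  have hSnn : ∀ x, 0 ≤ ⟪x, S x⟫ := fun x => by rw [hSquad]; positivity
  have hSlb : ∀ x, φ ^ 2 * ‖x‖ ^ 2 ≤ ⟪x, S x⟫ := fun x => by
    rw [hSquad]; exact le_add_of_nonneg_left (by positivity)
  have hSub : ∀ x, ⟪x, S x⟫ ≤ (Li ^ 2 + φ ^ 2) * ‖x‖ ^ 2 := by
    intro x
    rw [hSquad]
    have h2 : ‖T x‖ ^ 2 ≤ Li ^ 2 * ‖x‖ ^ 2 := by
      calc ‖T x‖ ^ 2 ≤ (Li * ‖x‖) ^ 2 := pow_le_pow_left₀ (norm_nonneg _) (hTnorm x) 2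
        _ = Li ^ 2 * ‖x‖ ^ 2 := by ring
    calc ‖T x‖ ^ 2 + φ ^ 2 * ‖x‖ ^ 2 ≤ Li ^ 2 * ‖x‖ ^ 2 + φ ^ 2 * ‖x‖ ^ 2 := by linarith
      _ = (Li ^ 2 + φ ^ 2) * ‖x‖ ^ 2 := by ring
  have hCSabs : ∀ x y, |⟪x, S y⟫| ≤ Real.sqrt ⟪x, S x⟫ * Real.sqrt ⟪y, S y⟫ :=
    dino_cs_abs S hSsym hSnn
  -- surjectivity of S
  have hSinj : Function.Injective S := by
    intro a' b' hab
    have h0 : S (a' - b') = 0 := by rw [map_sub, hab, sub_self]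
    have h1 := hSlb (a' - b')
    rw [h0, inner_zero_right] at h1
    have h2 : φ ^ 2 * ‖a' - b'‖ ^ 2 = 0 := le_antisymm h1 (by positivity)
    have h3 : ‖a' - b'‖ ^ 2 = 0 := by
      rcases mul_eq_zero.mp h2 with h | h
      · exact absurd h (by positivity)
      · exact h
    have h4 : ‖a' - b'‖ = 0 := pow_eq_zero_iff two_ne_zero |>.mp h3
    exact sub_eq_zero.mp (norm_eq_zero.mp h4)
  have hSsurj : Function.Surjective S := LinearMap.injective_iff_surjective.mp hSinj
  -- generic residual bound
  have hres_bound : ∀ r w, S w = r → ⟪w, S w⟫ ≤ (‖r‖ / φ) ^ 2 := by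
    intro r w hw
    refine dino_sc_res _ ‖w‖ ‖r‖ φ hφ ?_ (hSlb w) (norm_nonneg w) (norm_nonneg r)
    rw [hw]; exact real_inner_le_norm w r
  -- pick preimages
  obtain ⟨y, hy⟩ := hSsurj g
  obtain ⟨z, hz⟩ := hSsurj (T g)
  obtain ⟨w₁, hw₁⟩ := hSsurj (S v₁ - T g)
  obtain ⟨w₂, hw₂⟩ := hSsurj (S v₂ - g)
  set s := Real.sqrt ⟪y, S y⟫ with hsdef
  set c₁ := Real.sqrt ⟪v₁, S v₁⟫ with hc₁def
  set c₂ := Real.sqrt ⟪v₂, S v₂⟫ with hc₂def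
  have hsnn : 0 ≤ s := Real.sqrt_nonneg _
  have hc₁nn : 0 ≤ c₁ := Real.sqrt_nonneg _
  have hc₂nn : 0 ≤ c₂ := Real.sqrt_nonneg _
  have hs2 : s ^ 2 = ⟪y, S y⟫ := Real.sq_sqrt (hSnn y)
  have hc₁2 : c₁ ^ 2 = ⟪v₁, S v₁⟫ := Real.sq_sqrt (hSnn v₁)
  have hc₂2 : c₂ ^ 2 = ⟪v₂, S v₂⟫ := Real.sq_sqrt (hSnn v₂)
  -- bounds on residual preimages
  have hq₂ : Real.sqrt ⟪w₂, S w₂⟫ ≤ ε₂ * ‖g‖ / φ := by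
    have h1 : ⟪w₂, S w₂⟫ ≤ (ε₂ * ‖g‖ / φ) ^ 2 := by
      refine (hres_bound _ _ hw₂).trans ?_
      exact pow_le_pow_left₀ (by positivity) ((div_le_div_iff_of_pos_right hφ).mpr hres₂) 2
    calc Real.sqrt ⟪w₂, S w₂⟫ ≤ Real.sqrt ((ε₂ * ‖g‖ / φ) ^ 2) := Real.sqrt_le_sqrt h1
      _ = ε₂ * ‖g‖ / φ := Real.sqrt_sq (by positivity)
  have hq₁ : Real.sqrt ⟪w₁, S w₁⟫ ≤ ε₁ * Li * ‖g‖ / φ := by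
    have h1 : ⟪w₁, S w₁⟫ ≤ (ε₁ * Li * ‖g‖ / φ) ^ 2 := by
      refine (hres_bound _ _ hw₁).trans ?_
      refine pow_le_pow_left₀ (by positivity) ((div_le_div_iff_of_pos_right hφ).mpr ?_) 2
      calc ‖S v₁ - T g‖ ≤ ε₁ * ‖T g‖ := hres₁
        _ ≤ ε₁ * (Li * ‖g‖) := mul_le_mul_of_nonneg_left (hTnorm g) hε₁0
        _ = ε₁ * Li * ‖g‖ := (mul_assoc _ _ _).symm
    calc Real.sqrt ⟪w₁, S w₁⟫ ≤ Real.sqrt ((ε₁ * Li * ‖g‖ / φ) ^ 2) := Real.sqrt_le_sqrt h1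
      _ = ε₁ * Li * ‖g‖ / φ := Real.sqrt_sq (by positivity)
  have hqz : Real.sqrt ⟪z, S z⟫ ≤ ‖g‖ := by
    have h1 : ⟪z, S z⟫ = ⟪T z, g⟫ := by rw [hz]; exact (hTsym z g).symm
    have h2 : ⟪T z, g⟫ ≤ ‖T z‖ * ‖g‖ := real_inner_le_norm _ _
    have h3 : ‖T z‖ ^ 2 ≤ ⟪z, S z⟫ := by
      rw [hSquad]; exact le_add_of_nonneg_right (by positivity)
    have h4 : ⟪z, S z⟫ ≤ ‖g‖ ^ 2 :=
      dino_sc_z _ _ _ (h1 ▸ h2) h3 (hSnn z) (norm_nonneg g)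
    calc Real.sqrt ⟪z, S z⟫ ≤ Real.sqrt (‖g‖ ^ 2) := Real.sqrt_le_sqrt h4
      _ = ‖g‖ := Real.sqrt_sq hg0.le
  -- bound on v₁
  have hv1Tg : ⟪v₁, T g⟫ ≤ c₁ * ‖g‖ := by
    calc ⟪v₁, T g⟫ = ⟪v₁, S z⟫ := by rw [hz]
      _ ≤ |⟪v₁, S z⟫| := le_abs_self _
      _ ≤ c₁ * Real.sqrt ⟪z, S z⟫ := hCSabs v₁ z
      _ ≤ c₁ * ‖g‖ := mul_le_mul_of_nonneg_left hqz hc₁nn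
  have hv1w : ⟪v₁, S w₁⟫ ≤ c₁ * (ε₁ * Li * ‖g‖ / φ) := by
    calc ⟪v₁, S w₁⟫ ≤ |⟪v₁, S w₁⟫| := le_abs_self _
      _ ≤ c₁ * Real.sqrt ⟪w₁, S w₁⟫ := hCSabs v₁ w₁
      _ ≤ c₁ * (ε₁ * Li * ‖g‖ / φ) := mul_le_mul_of_nonneg_left hq₁ hc₁nn
  have hc₁le : c₁ ≤ ‖g‖ + ε₁ * Li * ‖g‖ / φ := by
    refine dino_sc_cancel _ _ hc₁nn (by positivity) ?_
    have e2 : S v₁ = T g + S w₁ := by rw [hw₁]; abel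
    calc c₁ ^ 2 = ⟪v₁, T g⟫ + ⟪v₁, S w₁⟫ := by rw [hc₁2, e2, inner_add_right]
      _ ≤ c₁ * ‖g‖ + c₁ * (ε₁ * Li * ‖g‖ / φ) := by linarith
      _ = c₁ * (‖g‖ + ε₁ * Li * ‖g‖ / φ) := by ring
  have hv1φ : φ * ‖v₁‖ ≤ c₁ := by
    refine dino_sc_sqle _ _ _ hφ.le (norm_nonneg v₁) hc₁nn ?_
    rw [hc₁2]; exact hSlb v₁
  have hv1norm : ‖v₁‖ ≤ 1 / φ * (1 + ε₁ * κ) * ‖g‖ :=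
    dino_scalar1 Li φ ε₁ ‖g‖ ‖v₁‖ c₁ κ hφ hLi0 hε₁0 hg0 hκdef hc₁le hv1φ
  refine ⟨by rw [norm_neg]; exact hv1norm, ?_⟩
  intro hcase
  -- s lower bound data
  have hs6 : (‖g‖ ^ 2) ^ 2 ≤ s ^ 2 * ((Li ^ 2 + φ ^ 2) * ‖g‖ ^ 2) := by
    have h1 : ⟪y, S g⟫ = ‖g‖ ^ 2 := by
      rw [← hSsym y g, hy, real_inner_self_eq_norm_sq]
    have h2 := dino_cs_aux S hSsym hSnn y g
    rw [h1] at h2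
    calc (‖g‖ ^ 2) ^ 2 ≤ ⟪y, S y⟫ * ⟪g, S g⟫ := h2
      _ = s ^ 2 * ⟪g, S g⟫ := by rw [hs2]
      _ ≤ s ^ 2 * ((Li ^ 2 + φ ^ 2) * ‖g‖ ^ 2) :=
        mul_le_mul_of_nonneg_left (hSub g) (sq_nonneg s)
  set t := ε₂ * ‖g‖ / φ with htdef
  -- lower bound on ⟪v₂, g⟫
  have hv2g : ⟪v₂, g⟫ = ⟪y, S y⟫ + ⟪w₂, S y⟫ := by
    have e1 : ⟪v₂, g⟫ = ⟪S v₂, y⟫ := by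
      rw [← hy]; exact (hSsym v₂ y).symm
    have e2 : S v₂ = g + S w₂ := by rw [hw₂]; abel
    rw [e1, e2, inner_add_left, hSsym w₂ y, ← hy, hSsym y y]
  have hw2Sy : |⟪w₂, S y⟫| ≤ t * s := by
    calc |⟪w₂, S y⟫| ≤ Real.sqrt ⟪w₂, S w₂⟫ * s := hCSabs w₂ y
      _ ≤ t * s := mul_le_mul_of_nonneg_right hq₂ hsnn
  have hD : s ^ 2 - t * s ≤ ⟪v₂, g⟫ := by
    rw [hv2g, ← hs2]
    linarith [(abs_le.mp hw2Sy).1]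
  -- upper bound on ‖v₂‖
  have hv2Sy : ⟪v₂, S y⟫ ≤ c₂ * s := le_trans (le_abs_self _) (hCSabs v₂ y)
  have hv2Sw : ⟪v₂, S w₂⟫ ≤ c₂ * t := by
    calc ⟪v₂, S w₂⟫ ≤ |⟪v₂, S w₂⟫| := le_abs_self _
      _ ≤ c₂ * Real.sqrt ⟪w₂, S w₂⟫ := hCSabs v₂ w₂
      _ ≤ c₂ * t := mul_le_mul_of_nonneg_left hq₂ hc₂nn
  have htnn : 0 ≤ t := by rw [htdef]; positivity
  have hc₂le : c₂ ≤ s + t := by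
    refine dino_sc_cancel _ _ hc₂nn (by linarith) ?_
    have e2 : S v₂ = S y + S w₂ := by rw [hw₂, hy]; abel
    calc c₂ ^ 2 = ⟪v₂, S y⟫ + ⟪v₂, S w₂⟫ := by rw [hc₂2, e2, inner_add_right]
      _ ≤ c₂ * s + c₂ * t := by linarith
      _ = c₂ * (s + t) := by ring
  have hv2φ : φ * ‖v₂‖ ≤ c₂ := by
    refine dino_sc_sqle _ _ _ hφ.le (norm_nonneg v₂) hc₂nn ?_
    rw [hc₂2]; exact hSlb v₂
  have hI1 : -⟪v₁, g⟫ ≤ ‖v₁‖ * ‖g‖ := by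
    have h1 := (abs_le.mp (abs_real_inner_le_norm v₁ g)).1
    linarith
  obtain ⟨hlam0, hkey⟩ := dino_scalar2 Li φ θ ε₁ ε₂ ‖g‖ ‖v₁‖ ‖v₂‖ ⟪v₂, g⟫ ⟪v₁, g⟫
    s t c₂ κ σ lam b hφ hLi0 hθ hε₁0 hε₂0 hg0 hκdef hσ0 hσ1 hσ2 hε₂σ hsnn hs6 htdef
    hD hpos hc₂le hv2φ (norm_nonneg v₂) hv1norm hI1 (norm_nonneg v₁) hcase hlam hb
  -- final assembly
  have htriangle : ‖-v₁ - lam • v₂‖ ≤ ‖v₁‖ + lam * ‖v₂‖ := by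
    have e1 : -v₁ - lam • v₂ = -(v₁ + lam • v₂) := by
      rw [neg_add, sub_eq_add_neg]
    rw [e1, norm_neg]
    calc ‖v₁ + lam • v₂‖ ≤ ‖v₁‖ + ‖lam • v₂‖ := norm_add_le _ _
      _ = ‖v₁‖ + lam * ‖v₂‖ := by rw [norm_smul, Real.norm_eq_abs, abs_of_nonneg hlam0]
  have hexpand : (1 / φ * (1 + ε₁ * κ) + b) * ‖g‖
      = 1 / φ * (1 + ε₁ * κ) * ‖g‖ + b * ‖g‖ := by ring
  rw [hexpand]
  linarith [htriangle, hv1norm, hkey]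
end

section
/- Contraction factor bound: suppose f has L-Lipschitz gradient, is bounded below by f*, and satisfies the PL inequality with constant mu > 0. If for every w with g = grad f(w) != 0 there is a direction p with <p, g> <= -theta ||g||^2 and ||p|| <= a ||g|| (theta, a > 0), then theta <= sqrt(2 L a^2 / mu), and consequently for tau = 2(1-rho)theta/(L a^2) with rho in (0,1), one has 0 <= 1 - tau*rho*mu*theta < 1. -/
open scoped RealInnerProductSpace

lemma descent_lemma {d : ℕ} (f : EuclideanSpace ℝ (Fin d) → ℝ) (L : ℝ) (hL : 0 < L)
    (hdiff : Differentiable ℝ f)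
    (hlip : ∀ x y : EuclideanSpace ℝ (Fin d),
      ‖gradient f x - gradient f y‖ ≤ L * ‖x - y‖)
    (x v : EuclideanSpace ℝ (Fin d)) :
    f (x + v) ≤ f x + ⟪gradient f x, v⟫ + L / 2 * ‖v‖ ^ 2 := by
  -- gradient is continuous
  have hgc : Continuous (gradient f) := by
    apply LipschitzWith.continuous (K := Real.toNNReal L)
    apply LipschitzWith.of_dist_le_mul
    intro p q
    simpa [dist_eq_norm, Real.coe_toNNReal _ hL.le] using hlip p q
  set φ : ℝ → ℝ := fun t => f (x + t • v) with hφ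
  have hderiv : ∀ t : ℝ, HasDerivAt φ ⟪gradient f (x + t • v), v⟫ t := by
    intro t
    have hc : HasDerivAt (fun t : ℝ => x + t • v) v t := by
      simpa using ((hasDerivAt_id t).smul_const v).const_add x
    have hf := (hdiff (x + t • v)).hasGradientAt.hasFDerivAt
    have := hf.comp_hasDerivAt t hc
    simpa [InnerProductSpace.toDual_apply_apply, Function.comp_def, hφ] using this
  have hcont : Continuous fun t : ℝ => ⟪gradient f (x + t • v), v⟫ := by
    exact (continuous_inner.comp (((hgc.comp (continuous_const.add
      (continuous_id.smul continuous_const))).prodMk continuous_const))).congr fun t => rfl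
  have hint : IntervalIntegrable (fun t : ℝ => ⟪gradient f (x + t • v), v⟫)
      MeasureTheory.volume 0 1 := hcont.intervalIntegrable 0 1
  have key : f (x + v) - f x = ∫ t in (0:ℝ)..1, ⟪gradient f (x + t • v), v⟫ := by
    have h := intervalIntegral.integral_eq_sub_of_hasDerivAt
      (f := φ) (f' := fun t => ⟪gradient f (x + t • v), v⟫)
      (fun t _ => hderiv t) hint
    simp only [hφ, one_smul, zero_smul, add_zero] at h
    exact h.symm
  have hbound : ∀ t ∈ Set.Icc (0:ℝ) 1,
      ⟪gradient f (x + t • v), v⟫ ≤ ⟪gradient f x, v⟫ + L * t * ‖v‖ ^ 2 := by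
    intro t ht
    have h1 : ⟪gradient f (x + t • v) - gradient f x, v⟫ ≤ ‖gradient f (x + t • v) - gradient f x‖ * ‖v‖ :=
      real_inner_le_norm _ _
    have h2 : ‖gradient f (x + t • v) - gradient f x‖ ≤ L * (t * ‖v‖) := by
      have := hlip (x + t • v) x
      simpa [norm_smul, abs_of_nonneg ht.1] using this
    have h3 : ‖gradient f (x + t • v) - gradient f x‖ * ‖v‖ ≤ L * (t * ‖v‖) * ‖v‖ :=
      mul_le_mul_of_nonneg_right h2 (norm_nonneg v)
    have h4 : ⟪gradient f (x + t • v) - gradient f x, v⟫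
        = ⟪gradient f (x + t • v), v⟫ - ⟪gradient f x, v⟫ := by
      rw [inner_sub_left]
    nlinarith [h1, h3]
  have hmono : (∫ t in (0:ℝ)..1, ⟪gradient f (x + t • v), v⟫)
      ≤ ∫ t in (0:ℝ)..1, (⟪gradient f x, v⟫ + L * t * ‖v‖ ^ 2) := by
    apply intervalIntegral.integral_mono_on (by norm_num) hint
    · exact (by fun_prop : Continuous fun t : ℝ => ⟪gradient f x, v⟫ + L * t * ‖v‖ ^ 2).intervalIntegrable 0 1
    · exact hbound
  have hval : (∫ t in (0:ℝ)..1, (⟪gradient f x, v⟫ + L * t * ‖v‖ ^ 2))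
      = ⟪gradient f x, v⟫ + L / 2 * ‖v‖ ^ 2 := by
    rw [intervalIntegral.integral_add (intervalIntegrable_const)
      ((by fun_prop : Continuous fun t : ℝ => L * t * ‖v‖ ^ 2).intervalIntegrable 0 1)]
    have : (∫ t in (0:ℝ)..1, L * t * ‖v‖ ^ 2) = L * ‖v‖^2 * ∫ t in (0:ℝ)..1, t := by
      rw [← intervalIntegral.integral_const_mul]
      congr 1; ext t; ring
    rw [this, integral_id]
    simp; ring
  linarith [key ▸ hmono.trans_eq hval]

/-- contraction factor bound: if `f` has `L`-Lipschitz gradient, is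
bounded below by `f*`, satisfies the PL inequality with constant `μ > 0`, and at every
point with nonzero gradient there exists a direction `p` with `⟪p, g⟫ ≤ -θ‖g‖²` and
`‖p‖ ≤ a‖g‖`, then `θ ≤ √(2La²/μ)`, and for `τ = 2(1-ρ)θ/(La²)` with `ρ ∈ (0,1)` one
has `0 ≤ 1 - τρμθ < 1`. -/
theorem contraction_factor_bound
    {d : ℕ} (f : EuclideanSpace ℝ (Fin d) → ℝ) (L fstar μ θ a ρ : ℝ)
    (hL : 0 < L) (hμ : 0 < μ) (hθ : 0 < θ) (ha : 0 < a) (hρ : ρ ∈ Set.Ioo (0 : ℝ) 1)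
    (hdiff : Differentiable ℝ f)
    (hlip : ∀ x y : EuclideanSpace ℝ (Fin d),
      ‖gradient f x - gradient f y‖ ≤ L * ‖x - y‖)
    (hbelow : ∀ x, fstar ≤ f x)
    (hPL : ∀ x : EuclideanSpace ℝ (Fin d), f x - fstar ≤ 1 / μ * ‖gradient f x‖ ^ 2)
    (hdir : ∀ w : EuclideanSpace ℝ (Fin d), gradient f w ≠ 0 →
      ∃ p : EuclideanSpace ℝ (Fin d),
        ⟪p, gradient f w⟫ ≤ -θ * ‖gradient f w‖ ^ 2 ∧ ‖p‖ ≤ a * ‖gradient f w‖)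
    (hex : ∃ w : EuclideanSpace ℝ (Fin d), gradient f w ≠ 0) :
    θ ≤ Real.sqrt (2 * L * a ^ 2 / μ)
    ∧ 0 ≤ 1 - 2 * (1 - ρ) * θ / (L * a ^ 2) * ρ * μ * θ
    ∧ 1 - 2 * (1 - ρ) * θ / (L * a ^ 2) * ρ * μ * θ < 1 := by
  obtain ⟨w, hw⟩ := hex
  set g := gradient f w with hg
  have hgnorm : 0 < ‖g‖ := norm_pos_iff.2 hw
  have hg2 : 0 < ‖g‖ ^ 2 := by positivity
  -- θ ≤ a
  obtain ⟨p, hp1, hp2⟩ := hdir w hw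
  have hθa : θ ≤ a := by
    have h1 : θ * ‖g‖ ^ 2 ≤ -⟪p, g⟫ := by linarith [hp1]
    have h2 : -⟪p, g⟫ ≤ ‖p‖ * ‖g‖ := by
      have := real_inner_le_norm (-p) g
      simpa [inner_neg_left] using this
    have h3 : ‖p‖ * ‖g‖ ≤ a * ‖g‖ * ‖g‖ :=
      mul_le_mul_of_nonneg_right hp2 (norm_nonneg g)
    have : θ * ‖g‖ ^ 2 ≤ a * ‖g‖ ^ 2 := by nlinarith
    exact le_of_mul_le_mul_right (by linarith [this]) hg2
  -- μ ≤ 2L via descent lemma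
  have hdesc := descent_lemma f L hL hdiff hlip w ((-(1/L)) • g)
  have hinner : ⟪g, (-(1/L)) • g⟫ = -(1/L) * ‖g‖ ^ 2 := by
    rw [real_inner_smul_right, real_inner_self_eq_norm_sq]
  have hnorm : ‖(-(1/L)) • g‖ ^ 2 = (1/L)^2 * ‖g‖ ^ 2 := by
    rw [norm_smul, Real.norm_eq_abs, abs_neg, abs_div, abs_one, abs_of_pos hL]
    ring
  have hstep : f (w + (-(1/L)) • g) ≤ f w - 1/(2*L) * ‖g‖ ^ 2 := by
    rw [hinner, hnorm] at hdesc
    have : -(1/L) * ‖g‖^2 + L/2 * ((1/L)^2 * ‖g‖^2) = -(1/(2*L)) * ‖g‖^2 := by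
      field_simp; ring
    linarith [hdesc, this.symm.le]
  have hμ2L : μ ≤ 2 * L := by
    have h1 : fstar ≤ f (w + (-(1/L)) • g) := hbelow _
    have h2 : 1/(2*L) * ‖g‖ ^ 2 ≤ f w - fstar := by linarith
    have h3 : 1/(2*L) * ‖g‖ ^ 2 ≤ 1/μ * ‖g‖ ^ 2 := h2.trans (hPL w)
    have h4 : 1/(2*L) ≤ 1/μ := le_of_mul_le_mul_right (by linarith) hg2
    rw [div_le_div_iff₀ (by positivity) hμ] at h4
    linarith
  -- first conclusion
  have hθsq : θ ^ 2 ≤ 2 * L * a ^ 2 / μ := by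
    rw [le_div_iff₀ hμ]
    have hθ2 : θ ^ 2 ≤ a ^ 2 := by nlinarith
    have := mul_le_mul hθ2 hμ2L hμ.le (by positivity : (0:ℝ) ≤ a ^ 2)
    linarith
  have c1 : θ ≤ Real.sqrt (2 * L * a ^ 2 / μ) := by
    have := Real.sqrt_le_sqrt hθsq
    rwa [Real.sqrt_sq hθ.le] at this
  refine ⟨c1, ?_, ?_⟩
  · have hD : (0:ℝ) < L * a ^ 2 := by positivity
    have hX : 2 * (1 - ρ) * θ / (L * a ^ 2) * ρ * μ * θ
        = 2 * (1 - ρ) * θ * ρ * μ * θ / (L * a ^ 2) := by ring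
    rw [hX, sub_nonneg, div_le_one hD]
    have hθ2μ : θ ^ 2 * μ ≤ 2 * L * a ^ 2 := by
      rw [le_div_iff₀ hμ] at hθsq; linarith
    nlinarith [sq_nonneg (2*ρ - 1), mul_pos hL (pow_pos ha 2), hρ.1, hρ.2,
      mul_nonneg (mul_nonneg hρ.1.le (sub_nonneg.2 hρ.2.le)) hμ.le,
      mul_le_mul_of_nonneg_left hθ2μ (mul_nonneg hρ.1.le (sub_nonneg.2 hρ.2.le))]
  · have : 0 < 2 * (1 - ρ) * θ / (L * a ^ 2) * ρ * μ * θ := by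
      have h1ρ : 0 < 1 - ρ := by linarith [hρ.2]
      have := hρ.1
      positivity
    linarith
end

section
/- If the conjugate gradient method is applied to the symmetric positive definite system A v = g with initial iterate v_0 = 0 and g != 0, then every CG iterate v_k with k >= 1 satisfies <v_k, g> > 0. -/
open Matrix
open scoped RealInnerProductSpace

lemma cg_aux_nonneg {d : ℕ} (A : Matrix (Fin d) (Fin d) ℝ) (hA : A.PosDef)
    (x : EuclideanSpace ℝ (Fin d)) : 0 ≤ ⟪A.toEuclideanLin x, x⟫ := by
  rcases eq_or_ne x 0 with rfl | hx
  · simp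
  · have h := hA.dotProduct_mulVec_pos (x := (WithLp.equiv 2 (Fin d → ℝ)) x) (by simpa using hx)
    have : ⟪A.toEuclideanLin x, x⟫ =
        star ((WithLp.equiv 2 (Fin d → ℝ)) x) ⬝ᵥ A *ᵥ ((WithLp.equiv 2 (Fin d → ℝ)) x) := by
      simp [PiLp.inner_apply, Matrix.toEuclideanLin_apply, dotProduct, mul_comm]
    rw [this]
    exact le_of_lt h

/-- If CG is applied to the SPD system `A v = g` with `v₀ = 0` and
`g ≠ 0`, then every CG iterate `v_k`, `k ≥ 1`, satisfies `⟪v_k, g⟫ > 0`. Here the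
`k`-th CG iterate is characterized as the minimizer of the `A`-norm of the error
`v - s` (where `A s = g`) over the Krylov subspace `span {g, Ag, …, A^{k-1} g}`. -/
theorem cg_iterate_inner_product_positive
    {d : ℕ} (A : Matrix (Fin d) (Fin d) ℝ) (hA : A.PosDef)
    (g s : EuclideanSpace ℝ (Fin d)) (hg : g ≠ 0)
    (hs : A.toEuclideanLin s = g)
    (k : ℕ) (hk : 1 ≤ k) (v : EuclideanSpace ℝ (Fin d))
    (hmem : v ∈ Submodule.span ℝ
      {x : EuclideanSpace ℝ (Fin d) | ∃ j < k, x = ((A.toEuclideanLin : Module.End ℝ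
        (EuclideanSpace ℝ (Fin d))) ^ j) g})
    (hmin : ∀ u ∈ Submodule.span ℝ
      {x : EuclideanSpace ℝ (Fin d) | ∃ j < k, x = ((A.toEuclideanLin : Module.End ℝ
        (EuclideanSpace ℝ (Fin d))) ^ j) g},
      ⟪A.toEuclideanLin (v - s), v - s⟫ ≤ ⟪A.toEuclideanLin (u - s), u - s⟫) :
    0 < ⟪v, g⟫ := by
  set T := A.toEuclideanLin with hT
  set K := Submodule.span ℝ
      {x : EuclideanSpace ℝ (Fin d) | ∃ j < k, x = ((A.toEuclideanLin : Module.End ℝ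
        (EuclideanSpace ℝ (Fin d))) ^ j) g} with hK
  have hsym : ∀ x y : EuclideanSpace ℝ (Fin d), ⟪T x, y⟫ = ⟪x, T y⟫ :=
    Matrix.isHermitian_iff_isSymmetric.mp hA.1
  have hnn : ∀ x : EuclideanSpace ℝ (Fin d), 0 ≤ ⟪T x, x⟫ := cg_aux_nonneg A hA
  have hgK : g ∈ K := by
    apply Submodule.subset_span
    exact ⟨0, hk, by simp⟩
  -- A-orthogonality of the error to the Krylov subspace
  have key : ∀ u ∈ K, ⟪T (v - s), u⟫ = 0 := by
    intro u hu
    set b := ⟪T u, u⟫ with hb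
    set c := ⟪T (v - s), u⟫ with hc
    have hbnn : 0 ≤ b := hnn u
    set t : ℝ := -c / (b + 1) with ht
    have hmemK : v + t • u ∈ K := K.add_mem hmem (K.smul_mem t hu)
    have hineq := hmin (v + t • u) hmemK
    have hexp : ⟪T (v + t • u - s), v + t • u - s⟫
        = ⟪T (v - s), v - s⟫ + 2 * t * c + t ^ 2 * b := by
      have h1 : v + t • u - s = (v - s) + t • u := by abel
      rw [h1, _root_.map_add, _root_.map_smul, inner_add_left, inner_add_right, inner_add_right,
        inner_smul_left, inner_smul_right, inner_smul_left, inner_smul_right]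
      have h2 : ⟪T u, v - s⟫ = c := by rw [hsym, real_inner_comm]
      rw [h2]
      simp only [RCLike.star_def, starRingEnd_apply, star_trivial]
      rw [← hc, ← hb]
      ring
    rw [hexp] at hineq
    have h0 : 0 ≤ 2 * t * c + t ^ 2 * b := by linarith
    have hb1 : 0 < b + 1 := by linarith
    have hbne : ((b + 1) ^ 2 : ℝ) ≠ 0 := by positivity
    have e : 2 * t * c + t ^ 2 * b = -(c ^ 2 * (b + 2)) / (b + 1) ^ 2 := by
      rw [ht]; field_simp; ring
    rw [e] at h0
    have h2 : 0 ≤ -(c ^ 2 * (b + 2)) := by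
      have := mul_nonneg h0 (sq_nonneg (b + 1))
      rwa [div_mul_cancel₀ _ hbne] at this
    have hcsq : c ^ 2 = 0 := le_antisymm (by nlinarith) (sq_nonneg c)
    exact pow_eq_zero_iff (two_ne_zero) |>.mp hcsq
  -- f(v) = ⟪T s, s⟫ - ⟪v, g⟫
  have hvK : ⟪T (v - s), v⟫ = 0 := key v hmem
  have hfv : ⟪T (v - s), v - s⟫ = ⟪T s, s⟫ - ⟪v, g⟫ := by
    have h1 : ⟪T (v - s), v - s⟫ = ⟪T (v - s), v⟫ - ⟪T (v - s), s⟫ := by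
      rw [inner_sub_right]
    have h2 : ⟪T (v - s), s⟫ = ⟪v - s, g⟫ := by rw [hsym, hs]
    rw [h1, hvK, h2, inner_sub_left]
    have h3 : ⟪s, g⟫ = ⟪T s, s⟫ := by rw [← hs, real_inner_comm]
    rw [h3]; ring
  -- compare with u = t • g
  set b := ⟪T g, g⟫ with hb
  have hbnn : 0 ≤ b := hnn g
  have hgg : (0:ℝ) < ⟪g, g⟫ := by
    rw [real_inner_self_eq_norm_sq]; exact pow_pos (norm_pos_iff.mpr hg) 2
  set t : ℝ := ⟪g, g⟫ / (b + 1) with ht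
  have htpos : 0 < t := div_pos hgg (by linarith)
  have htgK : (t • g : EuclideanSpace ℝ (Fin d)) ∈ K := K.smul_mem t hgK
  have hineq := hmin (t • g) htgK
  have hexp : ⟪T (t • g - s), t • g - s⟫ = t ^ 2 * b - 2 * t * ⟪g, g⟫ + ⟪T s, s⟫ := by
    rw [_root_.map_sub, _root_.map_smul, inner_sub_left, inner_sub_right, inner_sub_right,
      inner_smul_left, inner_smul_right, inner_smul_left, inner_smul_right]
    have h1 : ⟪T g, s⟫ = ⟪g, g⟫ := by rw [hsym, hs]
    have h2 : ⟪T s, g⟫ = ⟪g, g⟫ := by rw [hs]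
    rw [h1, h2]
    simp only [RCLike.star_def, starRingEnd_apply, star_trivial]
    rw [← hb]
    ring
  rw [hfv, hexp] at hineq
  -- so ⟪v, g⟫ ≥ 2 t ⟪g,g⟫ - t² b > 0
  have hkey : 2 * t * ⟪g, g⟫ - t ^ 2 * b ≤ ⟪v, g⟫ := by linarith
  have htb : t * b < 2 * ⟪g, g⟫ := by
    rw [ht]
    rw [div_mul_eq_mul_div, div_lt_iff₀ (by linarith : (0:ℝ) < b + 1)]
    nlinarith
  nlinarith
end
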